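/- For each sparse subset S ⊂ [n−1] there is exactly one permutation w in the equivalence class ⟨12⋯n⟩ (the class of the identity under ∼) whose descent set D(w) equals S. Conversely, if w ∈ ⟨12⋯n⟩ then D(w) is sparse. In particular, w ↦ D(w) is a bijection from ⟨12⋯n⟩ to the sparse subsets of [n−1]. -/

import Mathlib

/-- One interchange of two adjacent entries of a word whose values differ by exactly 1. -/
def AdjSwap1 (u v : List ℕ) : Prop :=
  ∃ (p q : List ℕ) (x y : ℕ), ((x : ℤ) - (y : ℤ)).natAbs = 1 ∧
    u = p ++ x :: y :: q ∧ v = p ++ y :: x :: q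

/-- The descent set of a word `w = a₁ a₂ ⋯ aₙ`:
`D(w) = {i ∈ [n-1] : aᵢ > aᵢ₊₁}` (positions are 1-based). -/
def DescentSet (w : List ℕ) : Set ℕ :=
  {i : ℕ | 1 ≤ i ∧ i < w.length ∧ w.getD i 0 < w.getD (i - 1) 0}

/-- A set of integers is sparse if it contains no two consecutive integers. -/
def SparseSet (S : Set ℕ) : Prop := ∀ i ∈ S, i + 1 ∉ S

open Classical in
/-- The word associated to a sparse set `S`: position `j` carries `j+1` if `j ∈ S`,
`j-1` if `j-1 ∈ S`, and `j` otherwise. -/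
noncomputable def fS (S : Set ℕ) (j : ℕ) : ℕ :=
  if j ∈ S then j + 1 else if j - 1 ∈ S then j - 1 else j

noncomputable def wrd (S : Set ℕ) (n : ℕ) : List ℕ := (List.range' 1 n).map (fS S)

lemma wrd_length (S : Set ℕ) (n : ℕ) : (wrd S n).length = n := by simp [wrd]

lemma wrd_getD {S : Set ℕ} {n i : ℕ} (h : i < n) : (wrd S n).getD i 0 = fS S (i + 1) := by
  rw [wrd, List.getD_eq_getElem _ _ (by simpa using h), List.getElem_map, List.getElem_range']
  congr 1
  omega

lemma fS_of_mem {S : Set ℕ} (hsp : SparseSet S) {i : ℕ} (hi : i ∈ S) :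
    fS S i = i + 1 ∧ fS S (i + 1) = i := by
  have h1 : i + 1 ∉ S := hsp i hi
  constructor
  · simp [fS, hi]
  · simp [fS, h1, hi]

open Classical in
lemma fS_of_not_mem {S : Set ℕ} {i : ℕ} (hi : i ∉ S) :
    fS S i = if i - 1 ∈ S then i - 1 else i := by simp [fS, hi]

lemma fS_congr {S S' : Set ℕ} {i : ℕ} (h : ∀ j, j ≠ i → (j ∈ S' ↔ j ∈ S)) :
    ∀ j, j ≠ i → j ≠ i + 1 → fS S' j = fS S j := by
  intro j hj hj1
  have h1 : (j ∈ S') ↔ (j ∈ S) := h j hj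
  have h2 : (j - 1 ∈ S') ↔ (j - 1 ∈ S) := h _ (by omega)
  simp only [fS]
  by_cases hm : j ∈ S
  · rw [if_pos hm, if_pos (h1.mpr hm)]
  · rw [if_neg hm, if_neg (fun c => hm (h1.mp c))]
    by_cases hm2 : j - 1 ∈ S
    · rw [if_pos hm2, if_pos (h2.mpr hm2)]
    · rw [if_neg hm2, if_neg (fun c => hm2 (h2.mp c))]

lemma wrd_decomp (S : Set ℕ) {n i : ℕ} (h1 : 1 ≤ i) (h2 : i + 1 ≤ n) :
    wrd S n = (List.range' 1 (i - 1)).map (fS S) ++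
      fS S i :: fS S (i + 1) :: (List.range' (i + 2) (n - i - 1)).map (fS S) := by
  have h3 : List.range' i ((n - i - 1) + 1 + 1) =
      i :: (i + 1) :: List.range' (i + 2) (n - i - 1) := by
    rw [List.range'_succ, List.range'_succ]
  have h4 := List.range'_append (s := 1) (m := i - 1) (n := (n - i - 1) + 1 + 1) (step := 1)
  rw [show 1 + 1 * (i - 1) = i by omega] at h4
  rw [show (i - 1) + ((n - i - 1) + 1 + 1) = n by omega] at h4
  have key : List.range' 1 n = List.range' 1 (i - 1) ++
      (i :: (i + 1) :: List.range' (i + 2) (n - i - 1)) := by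
    rw [← h4, h3]
  rw [wrd, key]
  simp

lemma wrd_eq_of_ends {S S' : Set ℕ} {n i : ℕ} (h1 : 1 ≤ i) (h2 : i + 1 ≤ n)
    (hmem : ∀ j, j ≠ i → (j ∈ S' ↔ j ∈ S)) :
    wrd S' n = (List.range' 1 (i - 1)).map (fS S) ++
      fS S' i :: fS S' (i + 1) :: (List.range' (i + 2) (n - i - 1)).map (fS S) := by
  rw [wrd_decomp S' h1 h2]
  have hc := fS_congr hmem
  have hpre : (List.range' 1 (i - 1)).map (fS S') = (List.range' 1 (i - 1)).map (fS S) := by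
    refine List.map_congr_left fun a ha => ?_
    rw [List.mem_range'_1] at ha
    exact hc a (by omega) (by omega)
  have hsuf : (List.range' (i + 2) (n - i - 1)).map (fS S')
      = (List.range' (i + 2) (n - i - 1)).map (fS S) := by
    refine List.map_congr_left fun a ha => ?_
    rw [List.mem_range'_1] at ha
    exact hc a (by omega) (by omega)
  rw [hpre, hsuf]

lemma sparse_mono {S S' : Set ℕ} (h : S' ⊆ S) (hsp : SparseSet S) : SparseSet S' :=
  fun j hj c => hsp j (h hj) (h c)

lemma fS_erase {S : Set ℕ} (hsp : SparseSet S) {i : ℕ} (h1 : 1 ≤ i) (hi : i ∈ S) :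
    fS (S \ {i}) i = i ∧ fS (S \ {i}) (i + 1) = i + 1 := by
  have him : i - 1 ∉ S := fun c => (hsp _ c) (by rwa [show i - 1 + 1 = i by omega])
  have a1 : i ∉ S \ {i} := by simp
  have a2 : i - 1 ∉ S \ {i} := fun c => him c.1
  have a3 : i + 1 ∉ S \ {i} := fun c => (hsp i hi) c.1
  have a4 : i + 1 - 1 ∉ S \ {i} := by simpa using a1
  constructor
  · simp [fS, a1, a2]
  · simp [fS, a3, a4]

lemma fS_insert {S : Set ℕ} {i : ℕ} (hi : i ∉ S) (hp : i + 1 ∉ S) :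
    fS (insert i S) i = i + 1 ∧ fS (insert i S) (i + 1) = i := by
  have a1 : i ∈ insert i S := Set.mem_insert i S
  have a2 : i + 1 ∉ insert i S := by
    intro c; rcases c with c | c
    · omega
    · exact hp c
  have a3 : i + 1 - 1 ∈ insert i S := by simpa using a1
  constructor
  · simp [fS, a1]
  · simp [fS, a1, a2]

lemma wrd_toggle (n : ℕ) {S : Set ℕ} (hsub : S ⊆ Set.Icc 1 (n - 1)) (hsp : SparseSet S)
    {i : ℕ} (hi : i ∈ S) : AdjSwap1 (wrd (S \ {i}) n) (wrd S n) := by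
  obtain ⟨h1, h2⟩ := hsub hi
  have hn : i + 1 ≤ n := by omega
  have hmem : ∀ j, j ≠ i → (j ∈ S \ {i} ↔ j ∈ S) := by
    intro j hj; simp [hj]
  have e1 := (fS_of_mem hsp hi).1
  have e2 := (fS_of_mem hsp hi).2
  obtain ⟨e3, e4⟩ := fS_erase hsp h1 hi
  refine ⟨(List.range' 1 (i - 1)).map (fS S),
    (List.range' (i + 2) (n - i - 1)).map (fS S), i, i + 1, by omega, ?_, ?_⟩
  · rw [wrd_eq_of_ends h1 hn hmem, e3, e4]
  · rw [wrd_decomp S h1 hn, e1, e2]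

lemma adjswap_closed {n : ℕ} {S : Set ℕ} (hsub : S ⊆ Set.Icc 1 (n - 1)) (hsp : SparseSet S)
    {v : List ℕ} (h : AdjSwap1 (wrd S n) v) :
    ∃ S' : Set ℕ, S' ⊆ Set.Icc 1 (n - 1) ∧ SparseSet S' ∧ v = wrd S' n := by
  obtain ⟨p, q, x, y, hxy, hu, hv⟩ := h
  have hlen : n = p.length + 2 + q.length := by
    have := congrArg List.length hu
    rw [wrd_length] at this
    simp at this
    omega
  set i := p.length + 1 with hidef
  have h1 : 1 ≤ i := by omega
  have h2 : i + 1 ≤ n := by omega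
  have hdec := wrd_decomp S h1 h2
  have heq : p ++ x :: y :: q = (List.range' 1 (i - 1)).map (fS S) ++
      fS S i :: fS S (i + 1) :: (List.range' (i + 2) (n - i - 1)).map (fS S) :=
    hu.symm.trans hdec
  have hplen : p.length = ((List.range' 1 (i - 1)).map (fS S)).length := by
    simp
    omega
  obtain ⟨hP, htail⟩ := List.append_inj heq hplen
  injection htail with hx htail'
  injection htail' with hy hq
  by_cases hiS : i ∈ S
  · refine ⟨S \ {i}, fun j hj => hsub hj.1, sparse_mono Set.diff_subset hsp, ?_⟩
    have hmem : ∀ j, j ≠ i → (j ∈ S \ {i} ↔ j ∈ S) := by intro j hj; simp [hj]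
    obtain ⟨e3, e4⟩ := fS_erase hsp h1 hiS
    rw [hv, hP, hq, hx, hy, (fS_of_mem hsp hiS).1, (fS_of_mem hsp hiS).2,
      wrd_eq_of_ends h1 h2 hmem, e3, e4]
  · subst hx hy
    by_cases hp : i + 1 ∈ S
    · exfalso
      have hy2 : fS S (i + 1) = i + 2 := by simp [fS, hp]
      have hxle : fS S i ≤ i := by rw [fS_of_not_mem hiS]; split <;> omega
      omega
    · by_cases hm : i - 1 ∈ S
      · exfalso
        have hge : 1 ≤ i - 1 := (hsub hm).1
        have hx1 : fS S i = i - 1 := by rw [fS_of_not_mem hiS, if_pos hm]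
        have hy1 : fS S (i + 1) = i + 1 := by
          rw [fS_of_not_mem hp]
          simp only [Nat.add_sub_cancel]
          rw [if_neg (show ¬(i + 1 - 1 ∈ S) by simpa using hiS)]
        omega
      · refine ⟨insert i S, ?_, ?_, ?_⟩
        · intro j hj
          rcases hj with rfl | hj
          · exact ⟨h1, by omega⟩
          · exact hsub hj
        · intro j hj c
          rcases hj with rfl | hj
          · rcases c with c | c
            · omega
            · exact hp c
          · rcases c with c | c
            · exact hm (by rwa [show i - 1 = j by omega])
            · exact hsp j hj c
        · have hmem : ∀ j, j ≠ i → (j ∈ insert i S ↔ j ∈ S) := by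
            intro j hj; simp [Set.mem_insert_iff, hj]
          obtain ⟨e3, e4⟩ := fS_insert hiS hp
          have hx1 : fS S i = i := by rw [fS_of_not_mem hiS, if_neg hm]
          have hy1 : fS S (i + 1) = i + 1 := by
            rw [fS_of_not_mem hp]
            simp only [Nat.add_sub_cancel]
            rw [if_neg (show ¬(i + 1 - 1 ∈ S) by simpa using hiS)]
          rw [hv, wrd_eq_of_ends h1 h2 hmem, e3, e4, hP, hq, hx1, hy1]

lemma wrd_empty (n : ℕ) : wrd (∅ : Set ℕ) n = List.range' 1 n := by
  rw [wrd]
  have h : ∀ a ∈ List.range' 1 n, fS (∅ : Set ℕ) a = id a := by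
    intro a _; simp [fS]
  rw [List.map_congr_left h, List.map_id]

lemma adjswap_symm {a b : List ℕ} (h : AdjSwap1 a b) : AdjSwap1 b a := by
  obtain ⟨p, q, x, y, hxy, h1, h2⟩ := h
  exact ⟨p, q, y, x, by omega, h2, h1⟩

lemma class_char {n : ℕ} {w : List ℕ}
    (h : Relation.EqvGen AdjSwap1 (List.range' 1 n) w) :
    ∃ S : Set ℕ, S ⊆ Set.Icc 1 (n - 1) ∧ SparseSet S ∧ w = wrd S n := by
  set C : List ℕ → Prop :=
    fun w => ∃ S : Set ℕ, S ⊆ Set.Icc 1 (n - 1) ∧ SparseSet S ∧ w = wrd S n with hC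
  have closed : ∀ a b, AdjSwap1 a b → C a → C b := by
    rintro a b hab ⟨S, hs1, hs2, rfl⟩
    exact adjswap_closed hs1 hs2 hab
  have main : ∀ a b, Relation.EqvGen AdjSwap1 a b → (C a ↔ C b) := by
    intro a b hab
    induction hab with
    | rel a b hr => exact ⟨closed a b hr, closed b a (adjswap_symm hr)⟩
    | refl => exact Iff.rfl
    | symm _ _ _ ih => exact ih.symm
    | trans _ _ _ _ _ ih1 ih2 => exact ih1.trans ih2
  have base : C (List.range' 1 n) :=
    ⟨∅, by simp, by intro j hj; simp at hj, (wrd_empty n).symm⟩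
  exact (main _ _ h).mp base

lemma reach (n : ℕ) : ∀ F : Finset ℕ, (↑F : Set ℕ) ⊆ Set.Icc 1 (n - 1) →
    SparseSet ↑F → Relation.EqvGen AdjSwap1 (List.range' 1 n) (wrd ↑F n) := by
  intro F
  induction F using Finset.strongInduction with
  | _ F ih =>
    intro hsub hsp
    rcases F.eq_empty_or_nonempty with rfl | ⟨i, hi⟩
    · rw [show ((↑(∅ : Finset ℕ) : Set ℕ)) = (∅ : Set ℕ) by simp, wrd_empty]
      exact Relation.EqvGen.refl _
    · have hiS : i ∈ (↑F : Set ℕ) := hi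
      have step := wrd_toggle n hsub hsp hiS
      have hco : (↑F : Set ℕ) \ {i} = ↑(F.erase i) := by
        simp [Finset.coe_erase]
      rw [hco] at step
      have hsub' : (↑(F.erase i) : Set ℕ) ⊆ Set.Icc 1 (n - 1) :=
        (Set.Subset.trans (by exact_mod_cast Finset.coe_subset.mpr (Finset.erase_subset i F)) hsub)
      have hsp' : SparseSet ↑(F.erase i) :=
        sparse_mono (by exact_mod_cast Finset.coe_subset.mpr (Finset.erase_subset i F)) hsp
      exact Relation.EqvGen.trans _ _ _
        (ih (F.erase i) (Finset.erase_ssubset hi) hsub' hsp')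
        (Relation.EqvGen.rel _ _ step)

lemma reach_set {n : ℕ} {S : Set ℕ} (hsub : S ⊆ Set.Icc 1 (n - 1)) (hsp : SparseSet S) :
    Relation.EqvGen AdjSwap1 (List.range' 1 n) (wrd S n) := by
  have hfin : S.Finite := (Set.finite_Icc 1 (n - 1)).subset hsub
  have hcoe : (↑hfin.toFinset : Set ℕ) = S := hfin.coe_toFinset
  have := reach n hfin.toFinset (by rw [hcoe]; exact hsub) (by rw [hcoe]; exact hsp)
  rwa [hcoe] at this

lemma descent_wrd {n : ℕ} {S : Set ℕ} (hsub : S ⊆ Set.Icc 1 (n - 1)) (hsp : SparseSet S) :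
    DescentSet (wrd S n) = S := by
  ext i
  simp only [DescentSet, Set.mem_setOf_eq, wrd_length]
  constructor
  · rintro ⟨hi1, hi2, hlt⟩
    rw [wrd_getD hi2, wrd_getD (show i - 1 < n by omega),
      show i - 1 + 1 = i by omega] at hlt
    by_contra hiS
    have hx : fS S i ≤ i := by rw [fS_of_not_mem hiS]; split <;> omega
    have hy : i + 1 ≤ fS S (i + 1) := by
      by_cases hp : i + 1 ∈ S
      · simp [fS, hp]
      · rw [fS_of_not_mem hp]
        simp only [Nat.add_sub_cancel]
        rw [if_neg (show ¬(i + 1 - 1 ∈ S) by simpa using hiS)]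
    omega
  · intro hiS
    obtain ⟨ha, hb⟩ := hsub hiS
    refine ⟨ha, by omega, ?_⟩
    rw [wrd_getD (show i < n by omega), wrd_getD (show i - 1 < n by omega),
      show i - 1 + 1 = i by omega, (fS_of_mem hsp hiS).1, (fS_of_mem hsp hiS).2]
    omega

/-- For each sparse `S ⊆ [n-1]` there is exactly one `w` in the class `⟨1 2 ⋯ n⟩`
of the identity under `∼` with descent set `S`; conversely every `w` in this class
has sparse descent set.  In particular `w ↦ D(w)` is a bijection from `⟨1 2 ⋯ n⟩`
to the sparse subsets of `[n-1]`. -/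
theorem stmt11 (n : ℕ) :
    (∀ S : Set ℕ, S ⊆ Set.Icc 1 (n - 1) → SparseSet S →
      ∃! w : List ℕ, Relation.EqvGen AdjSwap1 (List.range' 1 n) w ∧ DescentSet w = S) ∧
    (∀ w : List ℕ, Relation.EqvGen AdjSwap1 (List.range' 1 n) w →
      SparseSet (DescentSet w)) ∧
    Set.BijOn DescentSet
      {w : List ℕ | Relation.EqvGen AdjSwap1 (List.range' 1 n) w}
      {S : Set ℕ | S ⊆ Set.Icc 1 (n - 1) ∧ SparseSet S} := by
  refine ⟨?_, ?_, ?_, ?_, ?_⟩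
  · intro S hsub hsp
    refine ⟨wrd S n, ⟨reach_set hsub hsp, descent_wrd hsub hsp⟩, ?_⟩
    rintro w ⟨hw, hd⟩
    obtain ⟨S', hsub', hsp', rfl⟩ := class_char hw
    rw [descent_wrd hsub' hsp'] at hd
    rw [hd]
  · intro w hw
    obtain ⟨S', hsub', hsp', rfl⟩ := class_char hw
    rw [descent_wrd hsub' hsp']
    exact hsp'
  · intro w hw
    obtain ⟨S', hsub', hsp', rfl⟩ := class_char hw
    rw [descent_wrd hsub' hsp']
    exact ⟨hsub', hsp'⟩
  · intro w1 h1 w2 h2 hd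
    obtain ⟨S1, hsub1, hsp1, rfl⟩ := class_char h1
    obtain ⟨S2, hsub2, hsp2, rfl⟩ := class_char h2
    rw [descent_wrd hsub1 hsp1, descent_wrd hsub2 hsp2] at hd
    rw [hd]
  · rintro S ⟨hsub, hsp⟩
    exact ⟨wrd S n, reach_set hsub hsp, descent_wrd hsub hsp⟩
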